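/- arXiv:1205.3682 — 3 statements merged into one kernel-verified Lean document; each statement's English description precedes it below -/
import Mathlib

section
/- Let Y : Matrix β β ℂ and X : Matrix γ γ ℂ be positive definite, let B : Matrix β γ ℂ be arbitrary, and let C : Matrix γ γ ℂ be Hermitian. Then there exists t > 0 such that the block matrix fromBlocks Y B Bᴴ (t • X + C) is positive semidefinite. -/
open Matrix
open scoped ComplexOrder

/-- A Hermitian matrix minus `r` times the identity, where `r` is below all eigenvalues,
is positive semidefinite. -/
lemma isHermitian_sub_smul_one_posSemidef {n : Type*} [Fintype n] [DecidableEq n]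
    {A : Matrix n n ℂ} (hA : A.IsHermitian) {r : ℝ}
    (h : ∀ i, r ≤ hA.eigenvalues i) : (A - (r : ℂ) • 1).PosSemidef := by
  have hU : (hA.eigenvectorUnitary : Matrix n n ℂ) * star (hA.eigenvectorUnitary : Matrix n n ℂ)
      = 1 := (Matrix.mem_unitaryGroup_iff).mp hA.eigenvectorUnitary.2
  have key : A - (r : ℂ) • 1 =
      (hA.eigenvectorUnitary : Matrix n n ℂ) *
        diagonal (fun i => (hA.eigenvalues i : ℂ) - r) *
        (hA.eigenvectorUnitary : Matrix n n ℂ)ᴴ := by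
    have hd : diagonal (fun i => (hA.eigenvalues i : ℂ) - r)
        = diagonal (RCLike.ofReal ∘ hA.eigenvalues) - (r : ℂ) • 1 := by
      rw [smul_one_eq_diagonal, ← diagonal_sub]
      rfl
    rw [hd, mul_sub, sub_mul, ← star_eq_conjTranspose]
    congr 1
    · exact hA.spectral_theorem
    rw [mul_smul_comm, smul_mul_assoc, mul_one, hU]
  rw [key]
  exact (posSemidef_diagonal_iff.mpr fun i => by
    rw [← Complex.ofReal_sub]
    exact_mod_cast sub_nonneg.mpr (h i)).mul_mul_conjTranspose_same _

lemma smul_posSemidef {n : Type*} [Fintype n] {A : Matrix n n ℂ} (hA : A.PosSemidef)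
    {t : ℝ} (ht : 0 ≤ t) : (t • A).PosSemidef := by
  rw [posSemidef_iff_dotProduct_mulVec]
  constructor
  · unfold IsHermitian
    rw [conjTranspose_smul, star_trivial, hA.1.eq]
  · intro x
    have : star x ⬝ᵥ (t • A) *ᵥ x = (t : ℂ) * (star x ⬝ᵥ A *ᵥ x) := by
      rw [smul_mulVec, dotProduct_smul]
      simp [Complex.real_smul]
    rw [this]
    exact mul_nonneg (by exact_mod_cast ht) (hA.dotProduct_mulVec_nonneg x)

set_option maxHeartbeats 800000 in
theorem exists_t_block_psd
    {β γ : Type*} [Fintype β] [Fintype γ] [DecidableEq β] [DecidableEq γ]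
    (Y : Matrix β β ℂ) (hY : Y.PosDef)
    (X : Matrix γ γ ℂ) (hX : X.PosDef)
    (B : Matrix β γ ℂ) (C : Matrix γ γ ℂ) (hC : C.IsHermitian) :
    ∃ t : ℝ, 0 < t ∧ (Matrix.fromBlocks Y B Bᴴ (t • X + C)).PosSemidef := by
  -- the Schur complement data
  set M : Matrix γ γ ℂ := C - Bᴴ * Y⁻¹ * B with hM
  have hMherm : M.IsHermitian := by
    apply hC.sub
    have hYinv : Y⁻¹.IsHermitian := hY.1.inv
    unfold IsHermitian
    rw [conjTranspose_mul, conjTranspose_mul, conjTranspose_conjTranspose, hYinv.eq]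
    exact (Matrix.mul_assoc Bᴴ Y⁻¹ B).symm
  -- a constant c ≥ 0 with M + c • 1 PSD
  set c : ℝ := ∑ i, |hMherm.eigenvalues i| with hc
  have hc0 : 0 ≤ c := Finset.sum_nonneg fun i _ => abs_nonneg _
  have hMc : (M + (c : ℂ) • 1).PosSemidef := by
    have : M + (c : ℂ) • 1 = M - ((-c : ℝ) : ℂ) • 1 := by push_cast; rw [neg_smul, sub_neg_eq_add]
    rw [this]
    refine isHermitian_sub_smul_one_posSemidef hMherm fun i => ?_
    have h1 : |hMherm.eigenvalues i| ≤ c :=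
      Finset.single_le_sum (f := fun i => |hMherm.eigenvalues i|)
        (fun i _ => abs_nonneg _) (Finset.mem_univ i)
    linarith [neg_abs_le (hMherm.eigenvalues i)]
  -- a constant ε > 0 with X - ε • 1 PSD
  obtain ⟨ε, hε0, hXε⟩ : ∃ ε : ℝ, 0 < ε ∧ (X - (ε : ℂ) • 1).PosSemidef := by
    rcases isEmpty_or_nonempty γ with hemp | hne
    · refine ⟨1, one_pos, ?_⟩
      have : X - ((1 : ℝ) : ℂ) • 1 = 0 := Subsingleton.elim _ _
      rw [this]
      exact PosSemidef.zero
    · refine ⟨Finset.univ.inf' Finset.univ_nonempty hX.1.eigenvalues, ?_, ?_⟩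
      · obtain ⟨i, -, hi⟩ := Finset.exists_mem_eq_inf' Finset.univ_nonempty hX.1.eigenvalues
        rw [hi]; exact hX.eigenvalues_pos i
      · exact isHermitian_sub_smul_one_posSemidef hX.1 fun i =>
          Finset.inf'_le _ (Finset.mem_univ i)
  -- choose t
  haveI := hY.isUnit.invertible
  refine ⟨(c + 1) / ε, by positivity, ?_⟩
  rw [PosDef.fromBlocks₁₁ _ _ hY]
  have key : ((c + 1) / ε) • X + C - Bᴴ * Y⁻¹ * B
      = ((c + 1) / ε) • (X - (ε : ℂ) • 1) + (M + (c : ℂ) • 1) + (1 : ℂ) • (1 : Matrix γ γ ℂ) := by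
    have hεne : (ε : ℂ) ≠ 0 := by exact_mod_cast hε0.ne'
    rw [hM]
    ext i j
    simp only [Matrix.add_apply, Matrix.sub_apply, Matrix.smul_apply, Matrix.one_apply,
      smul_eq_mul, Complex.real_smul]
    split_ifs <;> (push_cast; field_simp; ring)
  rw [key]
  exact ((smul_posSemidef hXε (by positivity)).add hMc).add
    (by simpa using (PosSemidef.one : (1 : Matrix γ γ ℂ).PosSemidef))
end

section
/- Let H : Matrix k k ℂ be Hermitian and suppose there exist vectors x and y with re(star x ⬝ᵥ H.mulVec x) > 0 and re(star y ⬝ᵥ H.mulVec y) < 0 (H has both positive and negative eigenvalues). Then there exists a vector ψ with star ψ ⬝ᵥ H.mulVec ψ = 0 and H.mulVec ψ ≠ 0, i.e., the quadratic form of H vanishes at ψ although ψ is not in the kernel of H. -/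
open Matrix

theorem indefinite_has_null_vector_outside_kernel
    {k : Type*} [Fintype k] [DecidableEq k]
    (H : Matrix k k ℂ) (hH : H.IsHermitian)
    (x y : k → ℂ)
    (hx : 0 < (star x ⬝ᵥ H.mulVec x).re)
    (hy : (star y ⬝ᵥ H.mulVec y).re < 0) :
    ∃ ψ : k → ℂ, star ψ ⬝ᵥ H.mulVec ψ = 0 ∧ H.mulVec ψ ≠ 0 := by
  have key : ∀ u v : k → ℂ, star (star u ⬝ᵥ H.mulVec v) = star v ⬝ᵥ H.mulVec u := by
    intro u v
    rw [star_dotProduct, star_star, star_mulVec, ← dotProduct_mulVec, hH.eq]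
  set a : ℝ := (star y ⬝ᵥ H.mulVec y).re with ha
  set c : ℝ := (star x ⬝ᵥ H.mulVec x).re with hc
  have hax : (star x ⬝ᵥ H.mulVec x).im = 0 := by
    have h2 := congrArg Complex.im (key x x)
    simp at h2; linarith
  have hay : (star y ⬝ᵥ H.mulVec y).im = 0 := by
    have h2 := congrArg Complex.im (key y y)
    simp at h2; linarith
  set B : ℂ := star x ⬝ᵥ H.mulVec y + star y ⬝ᵥ H.mulVec x with hB
  have hBim : B.im = 0 := by
    have h2 := congrArg Complex.im (key x y)
    simp only [Complex.star_def, Complex.conj_im] at h2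
    simp [hB, Complex.add_im]; linarith
  set b : ℝ := B.re with hb
  have e1 : star x ⬝ᵥ H.mulVec x = (c : ℂ) := by
    apply Complex.ext <;> simp [hc, hax]
  have e2 : star y ⬝ᵥ H.mulVec y = (a : ℂ) := by
    apply Complex.ext <;> simp [ha, hay]
  have e3 : B = (b : ℂ) := by
    apply Complex.ext <;> simp [hb, hBim]
  have haneg : a < 0 := hy
  have hcpos : 0 < c := hx
  set d : ℝ := b ^ 2 - 4 * a * c with hd
  have hdpos : 0 < d := by nlinarith
  set s : ℝ := Real.sqrt d with hs
  have hs2 : s ^ 2 = d := Real.sq_sqrt hdpos.le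
  have hspos : 0 < s := Real.sqrt_pos.2 hdpos
  have hane : a ≠ 0 := ne_of_lt haneg
  set t₁ : ℝ := (-b + s) / (2 * a) with ht₁
  set t₂ : ℝ := (-b - s) / (2 * a) with ht₂
  have root : ∀ t : ℝ, (t = t₁ ∨ t = t₂) → a * t ^ 2 + b * t + c = 0 := by
    rintro t (rfl | rfl)
    · rw [ht₁]; field_simp; nlinarith [hs2]
    · rw [ht₂]; field_simp; nlinarith [hs2]
  have htne : t₁ ≠ t₂ := by
    intro h
    rw [ht₁, ht₂, div_eq_div_iff (by simp [hane]) (by simp [hane])] at h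
    nlinarith
  have expand : ∀ t : ℝ, star (x + (t : ℂ) • y) ⬝ᵥ H.mulVec (x + (t : ℂ) • y)
      = star x ⬝ᵥ H.mulVec x + (t : ℂ) * B + (t : ℂ) ^ 2 * (star y ⬝ᵥ H.mulVec y) := by
    intro t
    simp only [star_add, star_smul, mulVec_add, mulVec_smul, dotProduct_add,
      add_dotProduct, dotProduct_smul, smul_dotProduct, smul_eq_mul, hB,
      Complex.star_def, Complex.conj_ofReal]
    ring
  have null : ∀ t : ℝ, (t = t₁ ∨ t = t₂) →
      star (x + (t : ℂ) • y) ⬝ᵥ H.mulVec (x + (t : ℂ) • y) = 0 := by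
    intro t ht
    rw [expand t, e1, e2, e3]
    have : ((c : ℂ)) + (t : ℂ) * (b : ℂ) + (t : ℂ) ^ 2 * (a : ℂ)
        = ((a * t ^ 2 + b * t + c : ℝ) : ℂ) := by push_cast; ring
    rw [this, root t ht, Complex.ofReal_zero]
  by_cases h1 : H.mulVec (x + (t₁ : ℂ) • y) = 0
  · refine ⟨x + (t₂ : ℂ) • y, null t₂ (Or.inr rfl), ?_⟩
    intro h2
    have hdiff : H.mulVec (((t₁ : ℂ) - (t₂ : ℂ)) • y) = 0 := by
      have heq : (((t₁ : ℂ) - (t₂ : ℂ)) • y) = (x + (t₁ : ℂ) • y) - (x + (t₂ : ℂ) • y) := by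
        funext i; simp; ring
      rw [heq, mulVec_sub, h1, h2, sub_zero]
    rw [mulVec_smul, smul_eq_zero] at hdiff
    rcases hdiff with h | h
    · exact htne (by exact_mod_cast sub_eq_zero.mp (by exact_mod_cast h))
    · have : a = 0 := by rw [ha, h]; simp
      linarith
  · exact ⟨x + (t₁ : ℂ) • y, null t₁ (Or.inl rfl), h1⟩
end

section
/- Let R be a ℂ-submodule of (k → ℂ). Then the set of density matrices ρ : Matrix k k ℂ whose range is contained in R (i.e., ρ.mulVec x ∈ R for all x) is a face of the set of all k × k density matrices: IsExtreme ℝ {ρ | ρ is a density matrix} {ρ | ρ is a density matrix and ρ.mulVec x ∈ R for all x}. -/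
open scoped ComplexOrder
open Matrix

lemma aux_range_sub {k : Type*} [Fintype k] [DecidableEq k] (R : Submodule ℂ (k → ℂ))
    {ρ1 ρ2 ρ : Matrix k k ℂ} (h1 : ρ1.PosSemidef) (h2 : ρ2.PosSemidef)
    {a b : ℝ} (ha : 0 < a) (hb : 0 < b) (hsum : a • ρ1 + b • ρ2 = ρ)
    (hR : ∀ x, ρ.mulVec x ∈ R) : ∀ x, ρ1.mulVec x ∈ R := by
  classical
  set e := WithLp.linearEquiv 2 ℂ (k → ℂ)
  set R' : Submodule ℂ (EuclideanSpace ℂ k) := R.comap e.toLinearMap with hR'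
  have key : ∀ u ∈ R'ᗮ, ρ1.mulVec (e u) = 0 := by
    intro u hu
    set w : k → ℂ := e u with hw
    have hρw : star w ⬝ᵥ ρ.mulVec w = 0 := by
      have hmem : e.symm (ρ.mulVec w) ∈ R' := by
        simp [hR', Submodule.mem_comap, hR]
      have h0 : inner ℂ u (e.symm (ρ.mulVec w)) = (0:ℂ) :=
        (Submodule.mem_orthogonal' R' u).mp hu _ hmem
      rw [EuclideanSpace.inner_eq_star_dotProduct, dotProduct_comm] at h0
      exact h0
    have hexp : (a : ℂ) * (star w ⬝ᵥ ρ1.mulVec w) + (b : ℂ) * (star w ⬝ᵥ ρ2.mulVec w) = 0 := by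
      rw [← hρw, ← hsum]
      simp [Matrix.add_mulVec, Matrix.smul_mulVec, dotProduct_add, dotProduct_smul,
        Complex.real_smul]
    have hX : (0:ℂ) ≤ star w ⬝ᵥ ρ1.mulVec w := h1.dotProduct_mulVec_nonneg w
    have hY : (0:ℂ) ≤ star w ⬝ᵥ ρ2.mulVec w := h2.dotProduct_mulVec_nonneg w
    have haX : (0:ℂ) ≤ (a : ℂ) * (star w ⬝ᵥ ρ1.mulVec w) :=
      mul_nonneg (by exact_mod_cast ha.le) hX
    have hbY : (0:ℂ) ≤ (b : ℂ) * (star w ⬝ᵥ ρ2.mulVec w) :=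
      mul_nonneg (by exact_mod_cast hb.le) hY
    have hzero : (a : ℂ) * (star w ⬝ᵥ ρ1.mulVec w) = 0 := by
      have hle : (a : ℂ) * (star w ⬝ᵥ ρ1.mulVec w) ≤ 0 := by
        calc (a : ℂ) * (star w ⬝ᵥ ρ1.mulVec w)
            ≤ (a : ℂ) * (star w ⬝ᵥ ρ1.mulVec w) + (b : ℂ) * (star w ⬝ᵥ ρ2.mulVec w) :=
              le_add_of_nonneg_right hbY
          _ = 0 := hexp
      exact le_antisymm hle haX
    have : star w ⬝ᵥ ρ1.mulVec w = 0 := by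
      rcases mul_eq_zero.mp hzero with h | h
      · exact absurd h (by exact_mod_cast ha.ne')
      · exact h
    exact (h1.dotProduct_mulVec_zero_iff w).mp this
  intro x
  have hmem : e.symm (ρ1.mulVec x) ∈ R'ᗮᗮ := by
    rw [Submodule.mem_orthogonal]
    intro u hu
    rw [EuclideanSpace.inner_eq_star_dotProduct]
    have hzero : ρ1.mulVec (e u) = 0 := key u hu
    have hvm : star (e u) ᵥ* ρ1 = star (ρ1.mulVec (e u)) := by
      rw [Matrix.star_mulVec, h1.1]
    have : star u.ofLp ⬝ᵥ
        (e.symm (ρ1.mulVec x)).ofLp = star (e u) ⬝ᵥ ρ1.mulVec x := by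
      simp [e, WithLp.linearEquiv]
    rw [dotProduct_comm, this, dotProduct_mulVec, hvm, hzero]
    simp
  rw [Submodule.orthogonal_orthogonal] at hmem
  have := hmem
  simpa [hR', Submodule.mem_comap] using this

theorem densities_with_range_in_subspace_form_face
    {k : Type*} [Fintype k] [DecidableEq k] (R : Submodule ℂ (k → ℂ)) :
    IsExtreme ℝ
      {ρ : Matrix k k ℂ | ρ.PosSemidef ∧ ρ.trace = 1}
      {ρ : Matrix k k ℂ | (ρ.PosSemidef ∧ ρ.trace = 1) ∧ ∀ x, ρ.mulVec x ∈ R} := by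
  constructor
  · intro ρ hρ
    exact hρ.1
  · rintro ρ1 h1 ρ2 h2 ρ ⟨⟨hpsd, htr⟩, hRρ⟩ ⟨a, b, ha, hb, hab, hsum⟩
    exact ⟨h1, aux_range_sub R h1.1 h2.1 ha hb hsum hRρ⟩
end
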